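/- Let P = P_10 − z and let w_1 be one of its three 2-valent vertices. Then the set of vertices of P at maximum distance from w_1 is exactly the set of the other two 2-valent vertices. -/

import Mathlib

open SimpleGraph

/-- Degree of a vertex, via the cardinality of its neighbor set. -/
noncomputable def hdeg {V : Type*} (G : SimpleGraph V) (v : V) : ℕ :=
  {w | G.Adj v w}.ncard

/-- A cubic graph: every vertex has degree 3. -/
def IsCubic {V : Type*} (G : SimpleGraph V) : Prop := ∀ v, hdeg G v = 3

/-- A 2-connected graph: at least 3 vertices and deleting any vertex leaves it connected. -/
def TwoConnected {V : Type*} (G : SimpleGraph V) : Prop :=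
  3 ≤ Nat.card V ∧ ∀ v : V, (G.induce {v}ᶜ).Connected

/-- A 3-connected graph: at least 4 vertices and deleting any two vertices leaves it connected. -/
def ThreeConnected {V : Type*} (G : SimpleGraph V) : Prop :=
  4 ≤ Nat.card V ∧ ∀ v w : V, v ≠ w → (G.induce ({v, w} : Set V)ᶜ).Connected

/-- Edge list of the Petersen graph on `Fin 10` (vertex 9 has neighbors 4, 6, 7). -/
def petEdges : List (Fin 10 × Fin 10) :=
  [(0,1),(1,2),(2,3),(3,4),(4,0),(0,5),(1,6),(2,7),(3,8),(4,9),(5,7),(7,9),(9,6),(6,8),(8,5)]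

/-- The Petersen graph `P₁₀`. -/
def Pet : SimpleGraph (Fin 10) := SimpleGraph.fromRel (fun a b => (a, b) ∈ petEdges)

/-- Edge list of `P = P₁₀ - z` on `Fin 9` (where `z` was vertex 9);
its three 2-valent vertices are 4, 6, 7. -/
def pEdges : List (Fin 9 × Fin 9) :=
  [(0,1),(1,2),(2,3),(3,4),(4,0),(0,5),(1,6),(2,7),(3,8),(5,7),(6,8),(8,5)]

/-- The graph `P = P₁₀ - z`, the Petersen graph minus one vertex. -/
def Pgr : SimpleGraph (Fin 9) := SimpleGraph.fromRel (fun a b => (a, b) ∈ pEdges)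

/-- The three 2-valent vertices of `P` (as targets of the port assignment). -/
def portIdx : ℕ → Fin 9
  | 0 => 4
  | 1 => 6
  | _ => 7

/-- Port assignment: to which 2-valent vertex of the copy of `P` replacing `u` the
neighbor `v` of `u` gets attached (neighbors are ordered by the injective encoding `enc`). -/
noncomputable def port {V : Type*} (G : SimpleGraph V) (enc : V → ℕ) (u v : V) : Fin 9 :=
  portIdx (Nat.card {w : V | G.Adj u w ∧ enc w < enc v})

/-- Simultaneous `P`-inflation at every vertex of `G`. -/
noncomputable def inflate {V : Type*} (G : SimpleGraph V) (enc : V → ℕ) :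
    SimpleGraph (V × Fin 9) where
  Adj a b :=
    (a.1 = b.1 ∧ Pgr.Adj a.2 b.2) ∨
    (G.Adj a.1 b.1 ∧ a.2 = port G enc a.1 b.1 ∧ b.2 = port G enc b.1 a.1)
  symm := ⟨by
    rintro a b (⟨h1, h2⟩ | ⟨h1, h2, h3⟩)
    · exact Or.inl ⟨h1.symm, h2.symm⟩
    · exact Or.inr ⟨h1.symm, h3, h2⟩⟩
  loopless := ⟨by
    rintro a (⟨-, h⟩ | ⟨h, -, -⟩)
    · exact Pgr.ne_of_adj h rfl
    · exact G.ne_of_adj h rfl⟩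

/-- A graph bundled with an injective-style encoding of its vertices into `ℕ`. -/
structure GE where
  V : Type
  G : SimpleGraph V
  enc : V → ℕ

/-- One round of simultaneous `P`-inflation. -/
noncomputable def step (A : GE) : GE :=
  ⟨A.V × Fin 9, inflate A.G A.enc, fun p => Nat.pair (A.enc p.1) p.2.val⟩

/-- The iterated Petersen graph `P₁₀ᵏ`. -/
noncomputable def ItP10 : ℕ → GE
  | 0 => ⟨Fin 10, Pet, Fin.val⟩
  | k + 1 => step (ItP10 k)

/-- The iterated graph `Pᵏ` (starting from `P = P₁₀ - z`). -/
noncomputable def ItP : ℕ → GE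
  | 0 => ⟨Fin 9, Pgr, Fin.val⟩
  | k + 1 => step (ItP k)

/-- The canonical copy of `P^{k-1}` in `P₁₀ᵏ` containing a given vertex,
recorded by the corresponding vertex of `P₁₀`. -/
noncomputable def baseOf : (k : ℕ) → (ItP10 k).V → Fin 10
  | 0 => id
  | k + 1 => fun p => baseOf k p.1

/-- The parameter `l(G)`: minimum over circuits `C` of the maximum over vertices `v`
of the distance `d(C, v)`. -/
noncomputable def ell {V : Type*} (G : SimpleGraph V) : ℕ :=
  sInf { n | ∃ (v : V) (w : G.Walk v v), w.IsCycle ∧ ∀ u : V, ∃ x ∈ w.support, G.dist x u ≤ n }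

/-- `M` is a matching of `G`: a set of edges of `G`, pairwise not sharing a vertex. -/
def IsMatchingSet {V : Type*} (G : SimpleGraph V) (M : Set (Sym2 V)) : Prop :=
  M ⊆ G.edgeSet ∧ ∀ e ∈ M, ∀ f ∈ M, e ≠ f → ∀ v : V, ¬(v ∈ e ∧ v ∈ f)

/-- Every connected component of `H` has an even number of vertices. -/
def EvenComponents {V : Type*} (H : SimpleGraph V) : Prop :=
  ∀ c : H.ConnectedComponent, Even c.supp.ncard

/-- An `f`-matching: a matching `M` such that every component of `G - M` is
2-connected and has an even number of vertices. -/
def IsFMatching {V : Type*} (G : SimpleGraph V) (M : Set (Sym2 V)) : Prop :=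
  IsMatchingSet G M ∧
    ∀ c : (G.deleteEdges M).ConnectedComponent,
      TwoConnected ((G.deleteEdges M).induce c.supp) ∧ Even c.supp.ncard

/-- A minimal edge cut of `G`: deleting it disconnects `G`, but deleting any
proper subset does not. -/
def IsMinEdgeCut {V : Type*} (G : SimpleGraph V) (E : Set (Sym2 V)) : Prop :=
  E ⊆ G.edgeSet ∧ ¬(G.deleteEdges E).Connected ∧
    ∀ F : Set (Sym2 V), F ⊂ E → (G.deleteEdges F).Connected

/-- `H` is a subdivision of `F`: the vertices of `F` embed into `H` and each edge of `F`
corresponds to a path in `H`, the paths being internally disjoint and covering `H`. -/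
def IsSubdivisionOf {W U : Type*} (H : SimpleGraph W) (F : SimpleGraph U) : Prop :=
  ∃ f : U ↪ W, ∃ p : ∀ u v : U, F.Adj u v → H.Walk (f u) (f v),
    (∀ u v h, (p u v h).IsPath) ∧
    (∀ u v h, ∀ w ∈ (p u v h).support, w ∈ Set.range f → w = f u ∨ w = f v) ∧
    (∀ e : Sym2 W, e ∈ H.edgeSet ↔ ∃ u v h, e ∈ (p u v h).edges) ∧
    (∀ w : W, w ∈ Set.range f ∨ ∃ u v h, w ∈ (p u v h).support) ∧
    (∀ u v h u' v' h', ∀ w : W,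
      w ∈ (p u v h).support → w ∈ (p u' v' h').support →
      w ∈ Set.range f ∨ (u = u' ∧ v = v') ∨ (u = v' ∧ v = u'))

/-- Each component of `F` is an even circuit or a 2-connected cubic graph. -/
def GoodFrameComponents {U : Type*} (F : SimpleGraph U) : Prop :=
  ∀ c : F.ConnectedComponent,
    ((F.induce c.supp).Connected ∧ (∀ v, hdeg (F.induce c.supp) v = 2) ∧ Even c.supp.ncard) ∨
    (TwoConnected (F.induce c.supp) ∧ IsCubic (F.induce c.supp))

/-- `F` is a frame of `G`. -/
def IsFrame {U V : Type*} (F : SimpleGraph U) (G : SimpleGraph V) : Prop :=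
  GoodFrameComponents F ∧
    ∃ H : SimpleGraph V, H ≤ G ∧ IsSubdivisionOf H F ∧ EvenComponents H

/-- A proper 3-edge-coloring of `G`. -/
def ProperEdgeColoring {V : Type*} (G : SimpleGraph V) (f : Sym2 V → Fin 3) : Prop :=
  ∀ u v w : V, G.Adj u v → G.Adj u w → v ≠ w → f s(u, v) ≠ f s(u, w)

/-- The spanning subgraph of edges whose color is different from `c`
(i.e. the union of the other two color classes). -/
def twoClassSub {V : Type*} (G : SimpleGraph V) (f : Sym2 V → Fin 3) (c : Fin 3) :
    SimpleGraph V where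
  Adj u v := G.Adj u v ∧ f s(u, v) ≠ c
  symm := ⟨by
    rintro u v ⟨h1, h2⟩
    exact ⟨h1.symm, by rwa [Sym2.eq_swap]⟩⟩
  loopless := ⟨fun v h => G.ne_of_adj h.1 rfl⟩

/-- A Kotzig graph: a cubic graph with a proper 3-edge-coloring in which any two
color classes form a hamiltonian circuit. -/
def IsKotzig {V : Type*} (G : SimpleGraph V) : Prop :=
  IsCubic G ∧ ∃ f : Sym2 V → Fin 3, ProperEdgeColoring G f ∧
    ∀ c : Fin 3, (twoClassSub G f c).Connected ∧ ∀ v, hdeg (twoClassSub G f c) v = 2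

/-- The family `Fam` is an even subdivision-factor of `G`. -/
def IsEvenSubdivFactor {ι : Type*} (Fam : ι → Σ n : ℕ, SimpleGraph (Fin n))
    {V : Type*} (G : SimpleGraph V) : Prop :=
  ∃ H : SimpleGraph V, H ≤ G ∧ ∀ c : H.ConnectedComponent,
    Even c.supp.ncard ∧ ∃ i, IsSubdivisionOf (H.induce c.supp) (Fam i).2

instance : DecidableRel Pgr.Adj := fun a b =>
  inferInstanceAs (Decidable (a ≠ b ∧ _))

lemma hdeg_eq (v : Fin 9) : hdeg Pgr v = (Finset.univ.filter (Pgr.Adj v)).card := by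
  rw [hdeg, show {w | Pgr.Adj v w} = ↑(Finset.univ.filter (Pgr.Adj v)) from by ext; simp,
    Set.ncard_coe_finset]

lemma three_le_dist {a d : Fin 9} (hne : a ≠ d) (hna : ¬ Pgr.Adj a d)
    (hc : ∀ e, ¬(Pgr.Adj a e ∧ Pgr.Adj e d)) (hr : Pgr.Reachable a d) :
    3 ≤ Pgr.dist a d := by
  by_contra h
  push_neg at h
  obtain ⟨p, hp⟩ := hr.exists_walk_length_eq_dist
  have hl : p.length < 3 := by omega
  cases p with
  | nil => exact hne rfl
  | cons h1 q => cases q with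
    | nil => exact hna h1
    | cons h2 r => cases r with
      | nil => exact hc _ ⟨h1, h2⟩
      | cons h3 s => simp [Walk.length_cons] at hl; omega

lemma dist_eq_three {a d : Fin 9} (b c : Fin 9) (h1 : Pgr.Adj a b) (h2 : Pgr.Adj b c)
    (h3 : Pgr.Adj c d)
    (hne : a ≠ d) (hna : ¬ Pgr.Adj a d) (hc : ∀ e, ¬(Pgr.Adj a e ∧ Pgr.Adj e d)) :
    Pgr.dist a d = 3 := by
  have hw := Pgr.dist_le (Walk.cons h1 (Walk.cons h2 (Walk.cons h3 Walk.nil)))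
  simp only [Walk.length_cons, Walk.length_nil] at hw
  exact le_antisymm hw
    (three_le_dist hne hna hc ⟨Walk.cons h1 (Walk.cons h2 (Walk.cons h3 Walk.nil))⟩)

lemma dist_le_two' {a c : Fin 9} (b : Fin 9) (h1 : Pgr.Adj a b) (h2 : Pgr.Adj b c) :
    Pgr.dist a c ≤ 2 := by
  simpa using Pgr.dist_le (Walk.cons h1 (Walk.cons h2 Walk.nil))

lemma dist_le_one' {a b : Fin 9} (h1 : Pgr.Adj a b) : Pgr.dist a b ≤ 1 := by
  simpa using Pgr.dist_le (Walk.cons h1 Walk.nil)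

lemma case4 : {v : Fin 9 | ∀ u : Fin 9, Pgr.dist 4 u ≤ Pgr.dist 4 v} = {x : Fin 9 | hdeg Pgr x = 2 ∧ x ≠ 4} := by
  have hf1 : Pgr.dist 4 6 = 3 := dist_eq_three 0 1 (by decide) (by decide) (by decide) (by decide) (by decide) (by decide)
  have hf2 : Pgr.dist 4 7 = 3 := dist_eq_three 3 2 (by decide) (by decide) (by decide) (by decide) (by decide) (by decide)
  have hn1 : Pgr.dist (4:Fin 9) 1 ≤ 2 := dist_le_two' 0 (by decide) (by decide)
  have hn2 : Pgr.dist (4:Fin 9) 2 ≤ 2 := dist_le_two' 3 (by decide) (by decide)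
  have hn5 : Pgr.dist (4:Fin 9) 5 ≤ 2 := dist_le_two' 0 (by decide) (by decide)
  have hn8 : Pgr.dist (4:Fin 9) 8 ≤ 2 := dist_le_two' 3 (by decide) (by decide)
  have hn0 : Pgr.dist (4:Fin 9) 0 ≤ 2 := le_trans (dist_le_one' (by decide)) one_le_two
  have hn3 : Pgr.dist (4:Fin 9) 3 ≤ 2 := le_trans (dist_le_one' (by decide)) one_le_two
  have hs : Pgr.dist (4:Fin 9) 4 = 0 := Pgr.dist_self
  have hle : ∀ u : Fin 9, Pgr.dist 4 u ≤ 3 := by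
    intro u; fin_cases u
    · exact hn0.trans (by norm_num)
    · exact hn1.trans (by norm_num)
    · exact hn2.trans (by norm_num)
    · exact hn3.trans (by norm_num)
    · exact hs.le.trans (by norm_num)
    · exact hn5.trans (by norm_num)
    · exact hf1.le
    · exact hf2.le
    · exact hn8.trans (by norm_num)
  ext v; simp only [Set.mem_setOf_eq]; fin_cases v
  · show (∀ u : Fin 9, Pgr.dist 4 u ≤ Pgr.dist 4 0) ↔ hdeg Pgr 0 = 2 ∧ (0:Fin 9) ≠ 4
    refine ⟨fun h => ?_, fun h => absurd (hdeg_eq 0 ▸ h.1) (by decide)⟩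
    have := h 6; rw [hf1] at this; omega
  · show (∀ u : Fin 9, Pgr.dist 4 u ≤ Pgr.dist 4 1) ↔ hdeg Pgr 1 = 2 ∧ (1:Fin 9) ≠ 4
    refine ⟨fun h => ?_, fun h => absurd (hdeg_eq 1 ▸ h.1) (by decide)⟩
    have := h 6; rw [hf1] at this; omega
  · show (∀ u : Fin 9, Pgr.dist 4 u ≤ Pgr.dist 4 2) ↔ hdeg Pgr 2 = 2 ∧ (2:Fin 9) ≠ 4
    refine ⟨fun h => ?_, fun h => absurd (hdeg_eq 2 ▸ h.1) (by decide)⟩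
    have := h 6; rw [hf1] at this; omega
  · show (∀ u : Fin 9, Pgr.dist 4 u ≤ Pgr.dist 4 3) ↔ hdeg Pgr 3 = 2 ∧ (3:Fin 9) ≠ 4
    refine ⟨fun h => ?_, fun h => absurd (hdeg_eq 3 ▸ h.1) (by decide)⟩
    have := h 6; rw [hf1] at this; omega
  · show (∀ u : Fin 9, Pgr.dist 4 u ≤ Pgr.dist 4 4) ↔ hdeg Pgr 4 = 2 ∧ (4:Fin 9) ≠ 4
    refine ⟨fun h => ?_, fun h => absurd rfl h.2⟩
    have := h 6; rw [hf1, hs] at this; omega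
  · show (∀ u : Fin 9, Pgr.dist 4 u ≤ Pgr.dist 4 5) ↔ hdeg Pgr 5 = 2 ∧ (5:Fin 9) ≠ 4
    refine ⟨fun h => ?_, fun h => absurd (hdeg_eq 5 ▸ h.1) (by decide)⟩
    have := h 6; rw [hf1] at this; omega
  · show (∀ u : Fin 9, Pgr.dist 4 u ≤ Pgr.dist 4 6) ↔ hdeg Pgr 6 = 2 ∧ (6:Fin 9) ≠ 4
    exact ⟨fun _ => ⟨by rw [hdeg_eq]; decide, by decide⟩, fun _ u => by rw [hf1]; exact hle u⟩
  · show (∀ u : Fin 9, Pgr.dist 4 u ≤ Pgr.dist 4 7) ↔ hdeg Pgr 7 = 2 ∧ (7:Fin 9) ≠ 4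
    exact ⟨fun _ => ⟨by rw [hdeg_eq]; decide, by decide⟩, fun _ u => by rw [hf2]; exact hle u⟩
  · show (∀ u : Fin 9, Pgr.dist 4 u ≤ Pgr.dist 4 8) ↔ hdeg Pgr 8 = 2 ∧ (8:Fin 9) ≠ 4
    refine ⟨fun h => ?_, fun h => absurd (hdeg_eq 8 ▸ h.1) (by decide)⟩
    have := h 6; rw [hf1] at this; omega

lemma case6 : {v : Fin 9 | ∀ u : Fin 9, Pgr.dist 6 u ≤ Pgr.dist 6 v} = {x : Fin 9 | hdeg Pgr x = 2 ∧ x ≠ 6} := by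
  have hf1 : Pgr.dist 6 4 = 3 := dist_eq_three 1 0 (by decide) (by decide) (by decide) (by decide) (by decide) (by decide)
  have hf2 : Pgr.dist 6 7 = 3 := dist_eq_three 1 2 (by decide) (by decide) (by decide) (by decide) (by decide) (by decide)
  have hn0 : Pgr.dist (6:Fin 9) 0 ≤ 2 := dist_le_two' 1 (by decide) (by decide)
  have hn2 : Pgr.dist (6:Fin 9) 2 ≤ 2 := dist_le_two' 1 (by decide) (by decide)
  have hn3 : Pgr.dist (6:Fin 9) 3 ≤ 2 := dist_le_two' 8 (by decide) (by decide)
  have hn5 : Pgr.dist (6:Fin 9) 5 ≤ 2 := dist_le_two' 8 (by decide) (by decide)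
  have hn1 : Pgr.dist (6:Fin 9) 1 ≤ 2 := le_trans (dist_le_one' (by decide)) one_le_two
  have hn8 : Pgr.dist (6:Fin 9) 8 ≤ 2 := le_trans (dist_le_one' (by decide)) one_le_two
  have hs : Pgr.dist (6:Fin 9) 6 = 0 := Pgr.dist_self
  have hle : ∀ u : Fin 9, Pgr.dist 6 u ≤ 3 := by
    intro u; fin_cases u
    · exact hn0.trans (by norm_num)
    · exact hn1.trans (by norm_num)
    · exact hn2.trans (by norm_num)
    · exact hn3.trans (by norm_num)
    · exact hf1.le
    · exact hn5.trans (by norm_num)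
    · exact hs.le.trans (by norm_num)
    · exact hf2.le
    · exact hn8.trans (by norm_num)
  ext v; simp only [Set.mem_setOf_eq]; fin_cases v
  · show (∀ u : Fin 9, Pgr.dist 6 u ≤ Pgr.dist 6 0) ↔ hdeg Pgr 0 = 2 ∧ (0:Fin 9) ≠ 6
    refine ⟨fun h => ?_, fun h => absurd (hdeg_eq 0 ▸ h.1) (by decide)⟩
    have := h 4; rw [hf1] at this; omega
  · show (∀ u : Fin 9, Pgr.dist 6 u ≤ Pgr.dist 6 1) ↔ hdeg Pgr 1 = 2 ∧ (1:Fin 9) ≠ 6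
    refine ⟨fun h => ?_, fun h => absurd (hdeg_eq 1 ▸ h.1) (by decide)⟩
    have := h 4; rw [hf1] at this; omega
  · show (∀ u : Fin 9, Pgr.dist 6 u ≤ Pgr.dist 6 2) ↔ hdeg Pgr 2 = 2 ∧ (2:Fin 9) ≠ 6
    refine ⟨fun h => ?_, fun h => absurd (hdeg_eq 2 ▸ h.1) (by decide)⟩
    have := h 4; rw [hf1] at this; omega
  · show (∀ u : Fin 9, Pgr.dist 6 u ≤ Pgr.dist 6 3) ↔ hdeg Pgr 3 = 2 ∧ (3:Fin 9) ≠ 6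
    refine ⟨fun h => ?_, fun h => absurd (hdeg_eq 3 ▸ h.1) (by decide)⟩
    have := h 4; rw [hf1] at this; omega
  · show (∀ u : Fin 9, Pgr.dist 6 u ≤ Pgr.dist 6 4) ↔ hdeg Pgr 4 = 2 ∧ (4:Fin 9) ≠ 6
    exact ⟨fun _ => ⟨by rw [hdeg_eq]; decide, by decide⟩, fun _ u => by rw [hf1]; exact hle u⟩
  · show (∀ u : Fin 9, Pgr.dist 6 u ≤ Pgr.dist 6 5) ↔ hdeg Pgr 5 = 2 ∧ (5:Fin 9) ≠ 6
    refine ⟨fun h => ?_, fun h => absurd (hdeg_eq 5 ▸ h.1) (by decide)⟩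
    have := h 4; rw [hf1] at this; omega
  · show (∀ u : Fin 9, Pgr.dist 6 u ≤ Pgr.dist 6 6) ↔ hdeg Pgr 6 = 2 ∧ (6:Fin 9) ≠ 6
    refine ⟨fun h => ?_, fun h => absurd rfl h.2⟩
    have := h 4; rw [hf1, hs] at this; omega
  · show (∀ u : Fin 9, Pgr.dist 6 u ≤ Pgr.dist 6 7) ↔ hdeg Pgr 7 = 2 ∧ (7:Fin 9) ≠ 6
    exact ⟨fun _ => ⟨by rw [hdeg_eq]; decide, by decide⟩, fun _ u => by rw [hf2]; exact hle u⟩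
  · show (∀ u : Fin 9, Pgr.dist 6 u ≤ Pgr.dist 6 8) ↔ hdeg Pgr 8 = 2 ∧ (8:Fin 9) ≠ 6
    refine ⟨fun h => ?_, fun h => absurd (hdeg_eq 8 ▸ h.1) (by decide)⟩
    have := h 4; rw [hf1] at this; omega

lemma case7 : {v : Fin 9 | ∀ u : Fin 9, Pgr.dist 7 u ≤ Pgr.dist 7 v} = {x : Fin 9 | hdeg Pgr x = 2 ∧ x ≠ 7} := by
  have hf1 : Pgr.dist 7 4 = 3 := dist_eq_three 2 3 (by decide) (by decide) (by decide) (by decide) (by decide) (by decide)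
  have hf2 : Pgr.dist 7 6 = 3 := dist_eq_three 2 1 (by decide) (by decide) (by decide) (by decide) (by decide) (by decide)
  have hn1 : Pgr.dist (7:Fin 9) 1 ≤ 2 := dist_le_two' 2 (by decide) (by decide)
  have hn3 : Pgr.dist (7:Fin 9) 3 ≤ 2 := dist_le_two' 2 (by decide) (by decide)
  have hn0 : Pgr.dist (7:Fin 9) 0 ≤ 2 := dist_le_two' 5 (by decide) (by decide)
  have hn8 : Pgr.dist (7:Fin 9) 8 ≤ 2 := dist_le_two' 5 (by decide) (by decide)
  have hn2 : Pgr.dist (7:Fin 9) 2 ≤ 2 := le_trans (dist_le_one' (by decide)) one_le_two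
  have hn5 : Pgr.dist (7:Fin 9) 5 ≤ 2 := le_trans (dist_le_one' (by decide)) one_le_two
  have hs : Pgr.dist (7:Fin 9) 7 = 0 := Pgr.dist_self
  have hle : ∀ u : Fin 9, Pgr.dist 7 u ≤ 3 := by
    intro u; fin_cases u
    · exact hn0.trans (by norm_num)
    · exact hn1.trans (by norm_num)
    · exact hn2.trans (by norm_num)
    · exact hn3.trans (by norm_num)
    · exact hf1.le
    · exact hn5.trans (by norm_num)
    · exact hf2.le
    · exact hs.le.trans (by norm_num)
    · exact hn8.trans (by norm_num)
  ext v; simp only [Set.mem_setOf_eq]; fin_cases v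
  · show (∀ u : Fin 9, Pgr.dist 7 u ≤ Pgr.dist 7 0) ↔ hdeg Pgr 0 = 2 ∧ (0:Fin 9) ≠ 7
    refine ⟨fun h => ?_, fun h => absurd (hdeg_eq 0 ▸ h.1) (by decide)⟩
    have := h 4; rw [hf1] at this; omega
  · show (∀ u : Fin 9, Pgr.dist 7 u ≤ Pgr.dist 7 1) ↔ hdeg Pgr 1 = 2 ∧ (1:Fin 9) ≠ 7
    refine ⟨fun h => ?_, fun h => absurd (hdeg_eq 1 ▸ h.1) (by decide)⟩
    have := h 4; rw [hf1] at this; omega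
  · show (∀ u : Fin 9, Pgr.dist 7 u ≤ Pgr.dist 7 2) ↔ hdeg Pgr 2 = 2 ∧ (2:Fin 9) ≠ 7
    refine ⟨fun h => ?_, fun h => absurd (hdeg_eq 2 ▸ h.1) (by decide)⟩
    have := h 4; rw [hf1] at this; omega
  · show (∀ u : Fin 9, Pgr.dist 7 u ≤ Pgr.dist 7 3) ↔ hdeg Pgr 3 = 2 ∧ (3:Fin 9) ≠ 7
    refine ⟨fun h => ?_, fun h => absurd (hdeg_eq 3 ▸ h.1) (by decide)⟩
    have := h 4; rw [hf1] at this; omega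
  · show (∀ u : Fin 9, Pgr.dist 7 u ≤ Pgr.dist 7 4) ↔ hdeg Pgr 4 = 2 ∧ (4:Fin 9) ≠ 7
    exact ⟨fun _ => ⟨by rw [hdeg_eq]; decide, by decide⟩, fun _ u => by rw [hf1]; exact hle u⟩
  · show (∀ u : Fin 9, Pgr.dist 7 u ≤ Pgr.dist 7 5) ↔ hdeg Pgr 5 = 2 ∧ (5:Fin 9) ≠ 7
    refine ⟨fun h => ?_, fun h => absurd (hdeg_eq 5 ▸ h.1) (by decide)⟩
    have := h 4; rw [hf1] at this; omega
  · show (∀ u : Fin 9, Pgr.dist 7 u ≤ Pgr.dist 7 6) ↔ hdeg Pgr 6 = 2 ∧ (6:Fin 9) ≠ 7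
    exact ⟨fun _ => ⟨by rw [hdeg_eq]; decide, by decide⟩, fun _ u => by rw [hf2]; exact hle u⟩
  · show (∀ u : Fin 9, Pgr.dist 7 u ≤ Pgr.dist 7 7) ↔ hdeg Pgr 7 = 2 ∧ (7:Fin 9) ≠ 7
    refine ⟨fun h => ?_, fun h => absurd rfl h.2⟩
    have := h 4; rw [hf1, hs] at this; omega
  · show (∀ u : Fin 9, Pgr.dist 7 u ≤ Pgr.dist 7 8) ↔ hdeg Pgr 8 = 2 ∧ (8:Fin 9) ≠ 7
    refine ⟨fun h => ?_, fun h => absurd (hdeg_eq 8 ▸ h.1) (by decide)⟩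
    have := h 4; rw [hf1] at this; omega

/-- for a 2-valent vertex `w₁` of `P = P₁₀ - z`, the set of vertices
at maximum distance from `w₁` is exactly the set of the other two 2-valent vertices. -/
theorem stmt_4 (w1 : Fin 9) (h1 : hdeg Pgr w1 = 2) :
    {v : Fin 9 | ∀ u : Fin 9, Pgr.dist w1 u ≤ Pgr.dist w1 v} =
    {w : Fin 9 | hdeg Pgr w = 2 ∧ w ≠ w1} := by
  have hw : w1 = 4 ∨ w1 = 6 ∨ w1 = 7 := by
    fin_cases w1 <;> simp only [hdeg_eq] at h1 <;> revert h1 <;> decide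
  rcases hw with h | h | h <;> subst h
  · exact case4
  · exact case6
  · exact case7
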